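/- Let L be an infinite locally compact Hausdorff topological space without isolated points, let 𝒜 be a somewhat regular linear subspace of C₀(L), let g ∈ 𝒜 with ‖g‖ = 1, let μ be a continuous linear functional on C₀(L) with ‖μ‖ = 1 whose restriction to 𝒜 also has norm 1, and let α, ε > 0. Then there exists ψ ∈ 𝒜 with ‖ψ‖ = 1 such that μ(ψ) > 1 − α and ‖g + ψ‖ > 2 − ε. -/

import Mathlib

open scoped ZeroAtInfty

set_option maxHeartbeats 2000000
set_option synthInstance.maxHeartbeats 2000000

/-- A linear subspace `𝒜` of `C₀(L, ℝ)` is *somewhat regular* if for every non-empty open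
subset `V` of `L` and every `ε` with `0 < ε < 1` there is `f ∈ 𝒜` with `‖f‖ = 1` and
`|f x| ≤ ε` for every `x ∈ L \ V`. -/
def SomewhatRegular {L : Type*} [TopologicalSpace L]
    (𝒜 : Submodule ℝ C₀(L, ℝ)) : Prop :=
  ∀ V : Set L, IsOpen V → V.Nonempty → ∀ ε : ℝ, 0 < ε → ε < 1 →
    ∃ f ∈ 𝒜, ‖f‖ = 1 ∧ ∀ x ∉ V, |f x| ≤ ε

namespace SomewhatRegularAux

variable {L : Type*} [TopologicalSpace L]

lemma c0_apply_le (f : C₀(L, ℝ)) (x : L) : |f x| ≤ ‖f‖ := by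
  rw [← ZeroAtInftyContinuousMap.norm_toBCF_eq_norm]
  exact (f.toBCF.norm_coe_le_norm x)

lemma c0_norm_le (f : C₀(L, ℝ)) {C : ℝ} (hC : 0 ≤ C) (h : ∀ x, |f x| ≤ C) : ‖f‖ ≤ C := by
  rw [← ZeroAtInftyContinuousMap.norm_toBCF_eq_norm]
  exact BoundedContinuousFunction.norm_le hC |>.2 h

lemma c0_exists_gt (f : C₀(L, ℝ)) {c : ℝ} (hc : 0 ≤ c) (h : c < ‖f‖) : ∃ x, c < |f x| := by
  by_contra hcon
  push_neg at hcon
  exact absurd (c0_norm_le f hc hcon) (not_le.2 h)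

lemma c0_sum_apply {ι : Type*} (s : Finset ι) (u : ι → C₀(L, ℝ)) (x : L) :
    (∑ j ∈ s, u j) x = ∑ j ∈ s, u j x :=
  map_sum (⟨⟨fun f => f x, rfl⟩, fun _ _ => rfl⟩ : C₀(L, ℝ) →+ ℝ) u s

lemma peak (𝒜 : Submodule ℝ C₀(L, ℝ)) (h𝒜 : SomewhatRegular 𝒜) {V : Set L}
    (hV : IsOpen V) (hVne : V.Nonempty) {δ : ℝ} (hδ0 : 0 < δ) (hδ : δ < 1/2) :
    ∃ h ∈ 𝒜, ‖h‖ = 1 ∧ (∀ x ∉ V, |h x| ≤ δ) ∧ ∃ y ∈ V, 1 - δ < h y := by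
  obtain ⟨f, hf𝒜, hfn, hfs⟩ := h𝒜 V hV hVne δ hδ0 (by linarith)
  obtain ⟨y, hy⟩ := c0_exists_gt f (c := 1 - δ) (by linarith) (by rw [hfn]; linarith)
  have hyV : y ∈ V := by
    by_contra hc
    have := hfs y hc
    linarith
  rcases le_or_gt 0 (f y) with hfy | hfy
  · exact ⟨f, hf𝒜, hfn, hfs, y, hyV, by rw [abs_of_nonneg hfy] at hy; linarith⟩
  · refine ⟨-f, neg_mem hf𝒜, by rw [norm_neg]; exact hfn, ?_, y, hyV, ?_⟩
    · intro x hx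
      simpa using hfs x hx
    · have h0 : (-f) y = -(f y) := by simp
      rw [abs_of_neg hfy] at hy
      rw [h0]; linarith

lemma disj_opens [T2Space L] (hL : ∀ x : L, ¬ IsOpen ({x} : Set L)) :
    ∀ (N : ℕ) (W : Set L), IsOpen W → W.Nonempty →
    ∃ (U : ℕ → Set L) (p : ℕ → L),
      (∀ j < N, IsOpen (U j) ∧ p j ∈ U j ∧ U j ⊆ W) ∧
      (∀ i < N, ∀ j < N, i ≠ j → Disjoint (U i) (U j)) := by
  intro N
  induction N with
  | zero =>
    intro W _ hWne
    exact ⟨fun _ => ∅, fun _ => hWne.choose, fun j hj => by omega, fun i hi => by omega⟩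
  | succ N ih =>
    intro W hW hWne
    obtain ⟨x, hx⟩ := hWne
    have hexy : ∃ y ∈ W, y ≠ x := by
      by_contra hc
      push_neg at hc
      have : W = {x} := Set.eq_singleton_iff_nonempty_unique_mem.2 ⟨⟨x, hx⟩, hc⟩
      exact hL x (this ▸ hW)
    obtain ⟨y, hyW, hyx⟩ := hexy
    obtain ⟨U₁, U₂, hU₁, hU₂, hxU₁, hyU₂, hd⟩ := t2_separation (Ne.symm hyx)
    obtain ⟨U, p, hU, hdisj⟩ := ih (W ∩ U₂) (hW.inter hU₂) ⟨y, hyW, hyU₂⟩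
    refine ⟨fun j => Nat.casesOn j (W ∩ U₁) U, fun j => Nat.casesOn j x p, ?_, ?_⟩
    · rintro (_ | j) hj
      · exact ⟨hW.inter hU₁, ⟨hx, hxU₁⟩, Set.inter_subset_left⟩
      · obtain ⟨h1, h2, h3⟩ := hU j (by omega)
        exact ⟨h1, h2, h3.trans Set.inter_subset_left⟩
    · have hsub : ∀ j < N, U j ⊆ U₂ := fun j hj => (hU j hj).2.2.trans Set.inter_subset_right
      rintro (_ | i) hi (_ | j) hj hij
      · omega
      · exact Disjoint.mono Set.inter_subset_right (hsub j (by omega)) hd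
      · exact (Disjoint.mono Set.inter_subset_right (hsub i (by omega)) hd).symm
      · exact hdisj i (by omega) j (by omega) (by omega)

lemma almostPos (𝒜 : Submodule ℝ C₀(L, ℝ)) (h𝒜 : SomewhatRegular 𝒜) {δ : ℝ}
    (hδ0 : 0 < δ) (hδ : δ < 1/2) (n : ℕ) {V : Set L} (hV : IsOpen V) (hVne : V.Nonempty) :
    ∃ u ∈ 𝒜, ∃ W' : Set L, IsOpen W' ∧ W'.Nonempty ∧ W' ⊆ V ∧
      (∀ x, u x ≤ n) ∧ (∀ x, -(1 + n * δ) ≤ u x) ∧ (∀ x ∉ V, |u x| ≤ n * δ) ∧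
      (∀ x ∈ W', (n : ℝ) * (1 - δ) ≤ u x) := by
  induction n with
  | zero =>
    exact ⟨0, zero_mem 𝒜, V, hV, hVne, subset_rfl,
      fun x => by simp,
      fun x => by
        simp only [ZeroAtInftyContinuousMap.coe_zero, Pi.zero_apply]; push_cast; nlinarith,
      fun x _ => by simp, fun x _ => by simp⟩
  | succ n ih =>
    obtain ⟨u, hu𝒜, W', hW', hW'ne, hW'V, hub, hlb, hsmall, hcore⟩ := ih
    obtain ⟨h, hh𝒜, hhn, hhsmall, y, hyW', hhy⟩ := peak 𝒜 h𝒜 hW' hW'ne hδ0 hδ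
    have hh1 : ∀ x, |h x| ≤ 1 := fun x => (c0_apply_le h x).trans (le_of_eq hhn)
    refine ⟨u + h, add_mem hu𝒜 hh𝒜, W' ∩ {x | 1 - δ < h x},
      hW'.inter (isOpen_lt continuous_const h.continuous), ⟨y, hyW', hhy⟩,
      Set.inter_subset_left.trans hW'V, ?_, ?_, ?_, ?_⟩
    · intro x
      have h1 := hub x
      have h2 := (abs_le.1 (hh1 x)).2
      have h0 : (u + h) x = u x + h x := by simp
      rw [h0]; push_cast; linarith
    · intro x
      have h0 : (u + h) x = u x + h x := by simp
      rw [h0]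
      by_cases hx : x ∈ W'
      · have h1 := hcore x hx
        have h2 := (abs_le.1 (hh1 x)).1
        have h3 : (0:ℝ) ≤ (n : ℝ) * (1 - δ) := by
          have := Nat.cast_nonneg (α := ℝ) n; nlinarith
        push_cast; nlinarith [Nat.cast_nonneg (α := ℝ) n]
      · have h1 := hlb x
        have h2 := (abs_le.1 (hhsmall x hx)).1
        push_cast; linarith
    · intro x hx
      have h0 : (u + h) x = u x + h x := by simp
      rw [h0]
      have h1 := abs_le.1 (hsmall x hx)
      have h2 := abs_le.1 (hhsmall x (fun hc => hx (hW'V hc)))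
      rw [abs_le]; push_cast; constructor <;> linarith
    · rintro x ⟨hx1, hx2⟩
      have h0 : (u + h) x = u x + h x := by simp
      rw [h0]
      have h1 := hcore x hx1
      have h2 : 1 - δ < h x := hx2
      push_cast; linarith

lemma bump (𝒜 : Submodule ℝ C₀(L, ℝ)) (h𝒜 : SomewhatRegular 𝒜) {δ : ℝ}
    (hδ0 : 0 < δ) (hδ : δ < 1/2) {n : ℕ} (hn : 2 ≤ n) {V : Set L}
    (hV : IsOpen V) (hVne : V.Nonempty) :
    ∃ u ∈ 𝒜, ∃ y ∈ V, ‖u‖ ≤ 1 ∧ (∀ x ∉ V, |u x| ≤ δ) ∧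
      (∀ x, -((n : ℝ)⁻¹ + δ) ≤ u x) ∧ 1 - δ ≤ u y := by
  obtain ⟨u, hu𝒜, W', hW', hW'ne, hW'V, hub, hlb, hsmall, hcore⟩ :=
    almostPos 𝒜 h𝒜 hδ0 hδ n hV hVne
  have hn0 : (0:ℝ) < n := by positivity
  obtain ⟨y, hy⟩ := hW'ne
  have key : ∀ x, ((n:ℝ)⁻¹ • u) x = u x / n := by
    intro x; simp [div_eq_inv_mul]
  refine ⟨(n:ℝ)⁻¹ • u, Submodule.smul_mem 𝒜 _ hu𝒜, y, hW'V hy, ?_, ?_, ?_, ?_⟩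
  · refine c0_norm_le _ zero_le_one (fun x => ?_)
    rw [key, abs_div, abs_of_pos hn0, div_le_one hn0]
    have h1 := hub x
    have h2 := hlb x
    have h3 : 1 + (n:ℝ) * δ ≤ n := by
      have : (2:ℝ) ≤ n := by exact_mod_cast hn
      nlinarith
    rw [abs_le]; constructor <;> linarith
  · intro x hx
    rw [key, abs_div, abs_of_pos hn0, div_le_iff₀ hn0]
    have := hsmall x hx
    linarith [this, mul_comm ((n:ℝ)) δ]
  · intro x
    rw [key, le_div_iff₀ hn0]
    have h1 : -(1 + (n:ℝ) * δ) ≤ u x := hlb x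
    have hc : -((n:ℝ)⁻¹ + δ) * n = -(1 + δ * n) := by field_simp
    rw [hc, mul_comm δ]; linarith
  · rw [key, le_div_iff₀ hn0]
    have := hcore y hy
    linarith [this, mul_comm ((n:ℝ)) (1 - δ)]

lemma c0_norm_smul (c : ℝ) (f : C₀(L, ℝ)) : ‖c • f‖ = |c| * ‖f‖ := by
  rw [← ZeroAtInftyContinuousMap.norm_toBCF_eq_norm]
  have h : (c • f).toBCF = c • f.toBCF := rfl
  rw [h, norm_smul, Real.norm_eq_abs, ZeroAtInftyContinuousMap.norm_toBCF_eq_norm]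

lemma dual_near (𝒜 : Submodule ℝ C₀(L, ℝ))
    (T : StrongDual ℝ 𝒜) (hT : @Norm.norm (StrongDual ℝ 𝒜) (ContinuousLinearMap.hasOpNorm (E := 𝒜) (F := ℝ) (σ₁₂ := RingHom.id ℝ)) T = 1) {γ : ℝ} (hγ0 : 0 < γ) :
    ∃ a : 𝒜, ‖a‖ ≤ 1 ∧ 1 - γ < T a := by
  set δ : ℝ := min γ (1/2) with hδdef
  have hδ0 : 0 < δ := lt_min hγ0 (by norm_num)
  have hδ1 : δ ≤ 1/2 := min_le_right _ _
  have hδγ : δ ≤ γ := min_le_left _ _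
  suffices h : ∃ a : 𝒜, ‖a‖ ≤ 1 ∧ 1 - δ < T a by
    obtain ⟨a, h1, h2⟩ := h
    exact ⟨a, h1, by linarith⟩
  by_contra hc
  push_neg at hc
  have hcoe : ∀ x : 𝒜, ‖x‖ = ‖(x : C₀(L, ℝ))‖ := fun x => Submodule.coe_norm x
  have hTle : @Norm.norm (StrongDual ℝ 𝒜) (ContinuousLinearMap.hasOpNorm (E := 𝒜) (F := ℝ) (σ₁₂ := RingHom.id ℝ)) T ≤ 1 - δ := by
    apply ContinuousLinearMap.opNorm_le_bound _ (by linarith)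
    intro a
    rcases eq_or_ne a 0 with rfl | ha
    · simp
    · have hA : ((a : C₀(L, ℝ))) ≠ 0 := fun h => ha (Subtype.ext h)
      have hna : 0 < ‖a‖ := by rw [hcoe]; exact norm_pos_iff.2 hA
      set b : 𝒜 := ‖a‖⁻¹ • a with hbdef
      have hnb : ‖b‖ = 1 := by
        have hb2 : (b : C₀(L, ℝ)) = ‖a‖⁻¹ • (a : C₀(L, ℝ)) := rfl
        rw [hcoe, hb2, c0_norm_smul, abs_of_pos (inv_pos.2 hna), ← hcoe,
          inv_mul_cancel₀ (ne_of_gt hna)]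
      have h1 : T b ≤ 1 - δ := hc b (le_of_eq hnb)
      have h2 : T (-b) ≤ 1 - δ := hc (-b) (le_of_eq ((norm_neg b).trans hnb))
      have h2' : -(1 - δ) ≤ T b := by
        have hmn : T (-b) = -(T b) := map_neg T b
        rw [hmn] at h2; linarith
      have habs : |T b| ≤ 1 - δ := abs_le.2 ⟨h2', h1⟩
      have hab : a = ‖a‖ • b := by
        rw [hbdef, smul_smul, mul_inv_cancel₀ (ne_of_gt hna), one_smul]
      have hTa : T a = ‖a‖ * T b := by
        conv_lhs => rw [hab]
        rw [map_smul, smul_eq_mul]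
      calc ‖T a‖ = |‖a‖ * T b| := by rw [hTa, Real.norm_eq_abs]
        _ = ‖a‖ * |T b| := by rw [abs_mul, abs_of_pos hna]
        _ ≤ (1 - δ) * ‖a‖ := by
            rw [mul_comm]; exact mul_le_mul_of_nonneg_right habs (le_of_lt hna)
  rw [hT] at hTle; linarith

end SomewhatRegularAux

open SomewhatRegularAux

theorem somewhat_regular_daugavet_criterion
    {L : Type*} [TopologicalSpace L] [LocallyCompactSpace L] [T2Space L] [Infinite L]
    (hL : ∀ x : L, ¬ IsOpen ({x} : Set L))
    (𝒜 : Submodule ℝ C₀(L, ℝ)) (h𝒜 : SomewhatRegular 𝒜)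
    (g : C₀(L, ℝ)) (hg𝒜 : g ∈ 𝒜) (hg : ‖g‖ = 1)
    (μ : C₀(L, ℝ) →L[ℝ] ℝ) (hμ : ‖μ‖ = 1)
    (hμ𝒜 : @Norm.norm (StrongDual ℝ 𝒜)
      (ContinuousLinearMap.hasOpNorm (E := 𝒜) (F := ℝ) (σ₁₂ := RingHom.id ℝ))
      (μ.comp 𝒜.subtypeL) = 1)
    (α ε : ℝ) (hα : 0 < α) (hε : 0 < ε) :
    ∃ ψ ∈ 𝒜, ‖ψ‖ = 1 ∧ 1 - α < μ ψ ∧ 2 - ε < ‖g + ψ‖ := by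
  set γ : ℝ := min α (min ε 1) / 20 with hγdef
  have hγ0 : 0 < γ := by
    apply div_pos _ (by norm_num)
    exact lt_min hα (lt_min hε one_pos)
  have hγα : 20 * γ ≤ α := by
    have : min α (min ε 1) ≤ α := min_le_left _ _
    rw [hγdef]; linarith
  have hγε : 20 * γ ≤ ε := by
    have := (min_le_right α (min ε 1)).trans (min_le_left ε 1)
    rw [hγdef]; linarith
  have hγ1 : 20 * γ ≤ 1 := by
    have := (min_le_right α (min ε 1)).trans (min_le_right ε 1)
    rw [hγdef]; linarith
  have hγhalf : γ < 1/2 := by linarith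
  -- choice of n
  set n : ℕ := max 2 ⌈γ⁻¹⌉₊ with hndef
  have hn2 : 2 ≤ n := le_max_left _ _
  have hnpos : (0:ℝ) < n := by
    have : (2:ℝ) ≤ n := by exact_mod_cast hn2
    linarith
  have hninv : (n:ℝ)⁻¹ ≤ γ := by
    have h1 : γ⁻¹ ≤ (⌈γ⁻¹⌉₊ : ℝ) := Nat.le_ceil _
    have h2 : ((⌈γ⁻¹⌉₊ : ℕ) : ℝ) ≤ n := by
      exact_mod_cast Nat.le_max_right 2 ⌈γ⁻¹⌉₊
    have h3 : γ⁻¹ ≤ (n:ℝ) := h1.trans h2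
    calc (n:ℝ)⁻¹ ≤ (γ⁻¹)⁻¹ := by
          apply inv_anti₀ (by positivity) h3
      _ = γ := inv_inv γ
  -- Step 1: a near-norming element of 𝒜 for μ
  obtain ⟨f, hf𝒜, hfnorm, hμf⟩ :
      ∃ f ∈ 𝒜, ‖f‖ ≤ 1 ∧ 1 - γ < μ f := by
    obtain ⟨a, ha1, ha2⟩ := dual_near 𝒜 (μ.comp 𝒜.subtypeL) hμ𝒜 hγ0
    refine ⟨(a : C₀(L, ℝ)), a.2, ?_, ?_⟩
    · rw [Submodule.norm_coe]; exact ha1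
    · have hkey : (μ.comp 𝒜.subtypeL) a = μ (a : C₀(L, ℝ)) := by
        simp
      rw [← hkey]; exact ha2
  have hfb : ∀ x, |f x| ≤ 1 := fun x => (c0_apply_le f x).trans hfnorm
  -- Step 2: point where |g| is nearly 1, and the sign
  obtain ⟨x₀, hx₀⟩ := c0_exists_gt g (c := 1 - γ) (by linarith) (by rw [hg]; linarith)
  set s : ℝ := if 0 ≤ g x₀ then 1 else -1 with hsdef
  have hss : s = 1 ∨ s = -1 := by
    rw [hsdef]; split_ifs <;> simp
  have hsabs : |s| = 1 := by rcases hss with h | h <;> rw [h] <;> norm_num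
  have hs2 : s * s = 1 := by rcases hss with h | h <;> rw [h] <;> norm_num
  have hsg : 1 - γ < s * g x₀ := by
    rw [hsdef]
    split_ifs with h
    · rw [abs_of_nonneg h] at hx₀; linarith
    · push_neg at h
      rw [abs_of_neg h] at hx₀; linarith
  -- Step 3: the region where s*g is nearly 1
  set W : Set L := {x | 1 - γ < s * g x} with hWdef
  have hWopen : IsOpen W := isOpen_lt continuous_const (continuous_const.mul g.continuous)
  have hWne : W.Nonempty := ⟨x₀, hsg⟩
  -- Step 4: disjoint open subsets
  obtain ⟨U, p, hU, hUdisj⟩ := disj_opens hL n W hWopen hWne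
  -- Step 5-6: bumps in each piece
  set Wj : Fin n → Set L := fun j => U j ∩ {x | |f x - f (p j)| < γ} with hWjdef
  have hWjopen : ∀ j : Fin n, IsOpen (Wj j) := fun j =>
    ((hU j j.2).1).inter (isOpen_lt ((f.continuous.sub continuous_const).abs) continuous_const)
  have hWjne : ∀ j : Fin n, (Wj j).Nonempty := fun j =>
    ⟨p j, (hU j j.2).2.1, by simp [hγ0]⟩
  have H : ∀ j : Fin n, ∃ u ∈ 𝒜, ∃ y ∈ Wj j, ‖u‖ ≤ 1 ∧ (∀ x ∉ Wj j, |u x| ≤ γ) ∧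
      (∀ x, -((n : ℝ)⁻¹ + γ) ≤ u x) ∧ 1 - γ ≤ u y :=
    fun j => bump 𝒜 h𝒜 hγ0 hγhalf hn2 (hWjopen j) (hWjne j)
  choose u hu𝒜 y hyWj hunorm husmall hulow hupeak using H
  have hu1 : ∀ (j : Fin n) (x : L), |u j x| ≤ 1 :=
    fun j x => (c0_apply_le (u j) x).trans (hunorm j)
  -- Step 7: pigeonhole to find a bump with small μ-value
  obtain ⟨j, hμuj⟩ : ∃ j : Fin n, |μ (u j)| ≤ 2 * γ := by
    set sg : Fin n → ℝ := fun j => if 0 ≤ μ (u j) then 1 else -1 with hsgdef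
    have hsg1 : ∀ j, |sg j| = 1 := by
      intro j; rw [hsgdef]; dsimp only; split_ifs <;> norm_num
    have hsgval : ∀ j, sg j * μ (u j) = |μ (u j)| := by
      intro j; rw [hsgdef]; dsimp only
      split_ifs with h
      · rw [one_mul, abs_of_nonneg h]
      · push_neg at h; rw [abs_of_neg h]; ring
    set v : C₀(L, ℝ) := ∑ j, sg j • u j with hvdef
    have hμv : μ v = ∑ j, |μ (u j)| := by
      rw [hvdef, map_sum]
      exact Finset.sum_congr rfl fun j _ => by rw [map_smul, smul_eq_mul, hsgval j]
    have hvx : ∀ x, |v x| ≤ 1 + n * γ := by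
      intro x
      have hval : v x = ∑ j, sg j * u j x := by
        rw [hvdef, c0_sum_apply]; simp
      rw [hval]
      have h1 : |∑ j, sg j * u j x| ≤ ∑ j, |u j x| := by
        refine (Finset.abs_sum_le_sum_abs _ _).trans (le_of_eq ?_)
        exact Finset.sum_congr rfl fun j _ => by rw [abs_mul, hsg1 j, one_mul]
      by_cases hex : ∃ j₀ : Fin n, x ∈ Wj j₀
      · obtain ⟨j₀, hj₀⟩ := hex
        have h2 : ∑ j, |u j x| ≤ ∑ j : Fin n, (γ + if j = j₀ then 1 - γ else 0) := by
          refine Finset.sum_le_sum fun j _ => ?_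
          by_cases hjj : j = j₀
          · subst hjj
            have h := hu1 j x
            have e : (if j = j then 1 - γ else 0) = 1 - γ := if_pos rfl
            rw [e]; linarith
          · rw [if_neg hjj]
            have hxnot : x ∉ Wj j := by
              intro hxin
              have hdj := hUdisj j j.2 j₀ j₀.2 (fun hc => hjj (Fin.ext (by exact_mod_cast hc)))
              exact (Set.disjoint_left.1 hdj) (hxin.1) (hj₀.1)
            have := husmall j x hxnot; linarith
        have h3 : ∑ j : Fin n, (γ + if j = j₀ then 1 - γ else 0) = n * γ + (1 - γ) := by
          rw [Finset.sum_add_distrib, Finset.sum_const, Finset.sum_ite_eq' Finset.univ j₀]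
          simp [Finset.card_univ]
        calc |∑ j, sg j * u j x| ≤ _ := h1
          _ ≤ n * γ + (1 - γ) := h2.trans (le_of_eq h3)
          _ ≤ 1 + n * γ := by linarith
      · push_neg at hex
        have h2 : ∑ j, |u j x| ≤ ∑ _j : Fin n, γ :=
          Finset.sum_le_sum fun j _ => husmall j x (hex j)
        have h3 : ∑ _j : Fin n, γ = n * γ := by
          rw [Finset.sum_const, Finset.card_univ]; simp
        calc |∑ j, sg j * u j x| ≤ _ := h1
          _ ≤ n * γ := h2.trans (le_of_eq h3)
          _ ≤ 1 + n * γ := by linarith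
    have hvnorm : ‖v‖ ≤ 1 + n * γ := c0_norm_le v (by positivity) hvx
    have hsum : ∑ j, |μ (u j)| ≤ 1 + n * γ := by
      rw [← hμv]
      calc μ v ≤ |μ v| := le_abs_self _
        _ = ‖μ v‖ := (Real.norm_eq_abs _).symm
        _ ≤ ‖μ‖ * ‖v‖ := μ.le_opNorm v
        _ = ‖v‖ := by rw [hμ, one_mul]
        _ ≤ 1 + n * γ := hvnorm
    by_contra hcon
    push_neg at hcon
    haveI : Nonempty (Fin n) := ⟨⟨0, by omega⟩⟩
    have hlt : ∑ _j : Fin n, ((1 + n * γ) / n) < ∑ j, |μ (u j)| := by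
      apply Finset.sum_lt_sum_of_nonempty
      · exact Finset.univ_nonempty
      · intro j _
        refine lt_of_le_of_lt ?_ (hcon j)
        rw [div_le_iff₀ hnpos]
        have h1 : (n:ℝ)⁻¹ * n ≤ γ * n := mul_le_mul_of_nonneg_right hninv (le_of_lt hnpos)
        have e : (n:ℝ)⁻¹ * n = 1 := inv_mul_cancel₀ (ne_of_gt hnpos)
        rw [e] at h1
        linarith [mul_comm (n:ℝ) γ]
    have heq : ∑ _j : Fin n, ((1 + n * γ) / n) = 1 + n * γ := by
      rw [Finset.sum_const, Finset.card_univ]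
      simp only [Fintype.card_fin, nsmul_eq_mul]
      field_simp
    rw [heq] at hlt
    linarith
  -- Step 8: construct ψ̃
  set a : ℝ := f (p j) with hadef
  have ha : |a| ≤ 1 := hfb (p j)
  set c : ℝ := s - a with hcdef
  have hcle : |c| ≤ 2 := by
    rw [hcdef]
    calc |s - a| ≤ |s| + |a| := abs_sub _ _
      _ ≤ 2 := by rw [hsabs]; linarith
  set ψt : C₀(L, ℝ) := f + c • u j with hψtdef
  have hψt𝒜 : ψt ∈ 𝒜 := add_mem hf𝒜 (Submodule.smul_mem 𝒜 _ (hu𝒜 j))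
  have hψtapp : ∀ x, ψt x = f x + c * u j x := by
    intro x; rw [hψtdef]; simp
  have hulow2 : ∀ x, -(2*γ) ≤ u j x := by
    intro x
    have := hulow j x
    have : -((n:ℝ)⁻¹ + γ) ≥ -(2*γ) := by linarith [hninv]
    linarith [hulow j x]
  -- pointwise bound on ψt
  have hM : ∀ x, |ψt x| ≤ 1 + 5 * γ := by
    intro x
    rw [hψtapp]
    by_cases hx : x ∈ Wj j
    · have hfx : |f x - a| < γ := hx.2
      set t : ℝ := u j x with htdef
      have ht1 : t ≤ 1 := (abs_le.1 (hu1 j x)).2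
      have htl : -(2*γ) ≤ t := hulow2 x
      have hkey : |a + c * t| ≤ 1 + 4 * γ := by
        rw [hcdef]
        rcases le_or_gt 0 t with h | h
        · have e : a + (s - a) * t = a * (1 - t) + s * t := by ring
          rw [e]
          calc |a * (1 - t) + s * t| ≤ |a * (1-t)| + |s * t| := abs_add_le _ _
            _ = |a| * (1 - t) + |s| * t := by
                rw [abs_mul, abs_mul, abs_of_nonneg (by linarith : (0:ℝ) ≤ 1 - t),
                  abs_of_nonneg h]
            _ ≤ 1 * (1 - t) + 1 * t := by
                apply add_le_add
                · exact mul_le_mul_of_nonneg_right ha (by linarith)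
                · exact mul_le_mul_of_nonneg_right (le_of_eq hsabs) h
            _ = 1 := by ring
            _ ≤ 1 + 4 * γ := by linarith
        · calc |a + (s - a) * t| ≤ |a| + |s - a| * |t| := by
                refine (abs_add_le _ _).trans ?_
                rw [abs_mul]
            _ ≤ 1 + 2 * (2 * γ) := by
                have h1 : |t| ≤ 2 * γ := by rw [abs_of_neg h]; linarith
                have h2 : |s - a| ≤ 2 := hcdef ▸ hcle
                apply add_le_add ha
                calc |s - a| * |t| ≤ 2 * |t| := mul_le_mul_of_nonneg_right h2 (abs_nonneg t)
                  _ ≤ 2 * (2 * γ) := by linarith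
            _ ≤ 1 + 4 * γ := by linarith
      calc |f x + c * t| = |(f x - a) + (a + c * t)| := by ring_nf
        _ ≤ |f x - a| + |a + c * t| := abs_add_le _ _
        _ ≤ γ + (1 + 4 * γ) := by linarith
        _ = 1 + 5 * γ := by ring
    · have h1 := hfb x
      have h2 := husmall j x hx
      calc |f x + c * u j x| ≤ |f x| + |c| * |u j x| := by
            refine (abs_add_le _ _).trans ?_; rw [abs_mul]
        _ ≤ 1 + 2 * γ := by
            apply add_le_add h1
            calc |c| * |u j x| ≤ 2 * |u j x| := mul_le_mul_of_nonneg_right hcle (abs_nonneg _)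
              _ ≤ 2 * γ := by linarith
        _ ≤ 1 + 5 * γ := by linarith
  have hψtnorm : ‖ψt‖ ≤ 1 + 5 * γ := c0_norm_le ψt (by linarith) hM
  -- value at the peak point
  set yj : L := y j with hyjdef
  have hyjW : yj ∈ Wj j := hyWj j
  have hyjgW : 1 - γ < s * g yj := (hU j j.2).2.2 hyjW.1
  have hψty : 1 - 3 * γ ≤ s * ψt yj := by
    rw [hψtapp]
    set t : ℝ := u j yj with htdef
    have ht1 : t ≤ 1 := (abs_le.1 (hu1 j yj)).2
    have htpk : 1 - γ ≤ t := hupeak j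
    have hfyj : |f yj - a| < γ := hyjW.2
    have hsa : |s * a| ≤ 1 := by rw [abs_mul, hsabs, one_mul]; exact ha
    have hsa' := abs_le.1 hsa
    have e : s * (f yj + c * t) = s * (f yj - a) + (s * a * (1 - t) + s * s * t) := by
      rw [hcdef]; ring
    rw [e, hs2]
    have h1 : -γ ≤ s * (f yj - a) := by
      have : |s * (f yj - a)| ≤ γ := by
        rw [abs_mul, hsabs, one_mul]; linarith
      linarith [(abs_le.1 this).1]
    have h2 : s * a * (1 - t) + 1 * t ≥ 1 - 2 * γ := by
      nlinarith [(abs_le.1 hsa).1, ht1, htpk]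
    linarith
  have hψtnl : 1 - 3 * γ ≤ ‖ψt‖ := by
    have h1 : s * ψt yj ≤ |ψt yj| := by
      calc s * ψt yj ≤ |s * ψt yj| := le_abs_self _
        _ = |ψt yj| := by rw [abs_mul, hsabs, one_mul]
    linarith [c0_apply_le ψt yj, hψty]
  have hψtpos : 0 < ‖ψt‖ := by linarith
  -- μ of ψt
  have hμψt : 1 - 5 * γ < μ ψt := by
    have h0 : μ ψt = μ f + c * μ (u j) := by
      rw [hψtdef, map_add, map_smul, smul_eq_mul]
    have h1 : |c * μ (u j)| ≤ 4 * γ := by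
      rw [abs_mul]
      calc |c| * |μ (u j)| ≤ 2 * |μ (u j)| := mul_le_mul_of_nonneg_right hcle (abs_nonneg _)
        _ ≤ 2 * (2 * γ) := by linarith
        _ = 4 * γ := by ring
    have h2 := (abs_le.1 h1).1
    rw [h0]; linarith
  -- Step 9: the normalized function
  refine ⟨‖ψt‖⁻¹ • ψt, Submodule.smul_mem 𝒜 _ hψt𝒜, ?_, ?_, ?_⟩
  · rw [c0_norm_smul, abs_of_pos (inv_pos.2 hψtpos), inv_mul_cancel₀ (ne_of_gt hψtpos)]
  · -- functional bound
    rw [map_smul, smul_eq_mul]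
    have hinv : (1 + 5*γ)⁻¹ ≤ ‖ψt‖⁻¹ := by
      apply inv_anti₀ hψtpos hψtnorm
    have hμψt0 : 0 ≤ μ ψt := by linarith
    have h1 : (1 + 5*γ)⁻¹ * μ ψt ≤ ‖ψt‖⁻¹ * μ ψt :=
      mul_le_mul_of_nonneg_right hinv hμψt0
    have h2 : (1 + 5*γ)⁻¹ * (1 - 5*γ) < (1 + 5*γ)⁻¹ * μ ψt := by
      apply mul_lt_mul_of_pos_left hμψt (by positivity)
    have h3 : 1 - 10 * γ ≤ (1 + 5*γ)⁻¹ * (1 - 5*γ) := by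
      rw [inv_mul_eq_div, le_div_iff₀ (by linarith : (0:ℝ) < 1 + 5*γ)]
      nlinarith
    have h4 : 1 - α ≤ 1 - 10 * γ := by linarith
    linarith
  · -- norm bound
    have happ : (g + ‖ψt‖⁻¹ • ψt) yj = g yj + ‖ψt‖⁻¹ * ψt yj := by simp
    have h0 : |(g + ‖ψt‖⁻¹ • ψt) yj| ≤ ‖g + ‖ψt‖⁻¹ • ψt‖ := c0_apply_le _ yj
    have h1 : s * ((g + ‖ψt‖⁻¹ • ψt) yj) ≤ |(g + ‖ψt‖⁻¹ • ψt) yj| := by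
      calc s * ((g + ‖ψt‖⁻¹ • ψt) yj) ≤ |s * ((g + ‖ψt‖⁻¹ • ψt) yj)| := le_abs_self _
        _ = |(g + ‖ψt‖⁻¹ • ψt) yj| := by rw [abs_mul, hsabs, one_mul]
    have h2 : s * ((g + ‖ψt‖⁻¹ • ψt) yj) = s * g yj + ‖ψt‖⁻¹ * (s * ψt yj) := by
      rw [happ]; ring
    have hinv : (1 + 5*γ)⁻¹ ≤ ‖ψt‖⁻¹ := inv_anti₀ hψtpos hψtnorm
    have h3 : (1 + 5*γ)⁻¹ * (1 - 3*γ) ≤ ‖ψt‖⁻¹ * (s * ψt yj) := by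
      calc (1 + 5*γ)⁻¹ * (1 - 3*γ) ≤ ‖ψt‖⁻¹ * (1 - 3*γ) :=
            mul_le_mul_of_nonneg_right hinv (by linarith)
        _ ≤ ‖ψt‖⁻¹ * (s * ψt yj) :=
            mul_le_mul_of_nonneg_left hψty (by positivity)
    have h4 : 1 - 8 * γ ≤ (1 + 5*γ)⁻¹ * (1 - 3*γ) := by
      rw [inv_mul_eq_div, le_div_iff₀ (by linarith : (0:ℝ) < 1 + 5*γ)]
      nlinarith
    have h5 : 2 - 9 * γ < s * g yj + ‖ψt‖⁻¹ * (s * ψt yj) := by linarith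
    have h6 : 2 - ε < 2 - 9 * γ := by linarith
    linarith [h0, h1, h2 ▸ h5]
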